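/- Let G be a σ-pro-p-group, let N be a σ-invariant closed normal subgroup of G, and let ε ∈ {+1,−1}. Then the projection G → G/N restricts to a surjective map G^ε → (G/N)^ε. -/

import Mathlib

/-- In a pro-`p` group, `c ^ (p ^ n) → 1`. -/
private lemma aux_tendsto_pow {p : ℕ} (hp : p.Prime)
    {G : Type*} [Group G] [TopologicalSpace G] [IsTopologicalGroup G]
    [CompactSpace G] [T2Space G] [TotallyDisconnectedSpace G]
    (hGpro : ∀ U : Subgroup G, U.Normal → IsOpen (U : Set G) → ∃ n : ℕ, U.index = p ^ n)
    (c : G) :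
    Filter.Tendsto (fun n : ℕ => c ^ (p ^ n)) Filter.atTop (nhds 1) := by
  intro U hU
  rw [Filter.mem_map]
  obtain ⟨W, ⟨h1W, hWclopen⟩, hWU⟩ := (nhds_basis_clopen (1 : G)).mem_iff.mp hU
  obtain ⟨H, hH⟩ :=
    IsTopologicalGroup.exist_openNormalSubgroup_sub_clopen_nhds_of_one hWclopen h1W
  obtain ⟨m, hm⟩ := hGpro H.toSubgroup H.isNormal' H.toOpenSubgroup.isOpen
  have hbase : c ^ (p ^ m) ∈ H.toSubgroup := by
    have := H.toSubgroup.pow_index_mem c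
    rwa [hm] at this
  refine Filter.mem_of_superset (Filter.mem_atTop m) ?_
  intro n hn
  have : c ^ (p ^ n) ∈ H.toSubgroup := by
    have : c ^ (p ^ n) = (c ^ (p ^ m)) ^ (p ^ (n - m)) := by
      rw [← pow_mul, ← pow_add, Nat.add_sub_cancel' hn]
    rw [this]
    exact pow_mem hbase _
  exact hWU (hH this)

/-- In a pro-`p` group with `p` odd, every element has a square root in the closure of
the cyclic subgroup it generates. -/
private lemma aux_sqrt {p : ℕ} (hp : p.Prime) (hodd : Odd p)
    {G : Type*} [Group G] [TopologicalSpace G] [IsTopologicalGroup G]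
    [CompactSpace G] [T2Space G] [TotallyDisconnectedSpace G]
    (hGpro : ∀ U : Subgroup G, U.Normal → IsOpen (U : Set G) → ∃ n : ℕ, U.index = p ^ n)
    (c : G) :
    ∃ d ∈ closure ((Subgroup.zpowers c : Subgroup G) : Set G), d * d = c := by
  set K : Set G := closure ((Subgroup.zpowers c : Subgroup G) : Set G) with hK
  have hKcomp : IsCompact K := isClosed_closure.isCompact
  have hScomp : IsCompact ((fun x => x * x) '' K) :=
    hKcomp.image (continuous_id.mul continuous_id)
  have hSclosed : IsClosed ((fun x => x * x) '' K) := hScomp.isClosed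
  have hmem : ∀ n : ℕ, c ^ (p ^ n + 1) ∈ (fun x => x * x) '' K := by
    intro n
    obtain ⟨k, hk⟩ := (hodd.pow (n := n)).add_one
    refine ⟨c ^ k, subset_closure ?_, ?_⟩
    · exact Subgroup.mem_zpowers_iff.mpr ⟨(k : ℤ), by rw [zpow_natCast]⟩
    · show c ^ k * c ^ k = c ^ (p ^ n + 1)
      rw [← pow_add, ← hk]
  have htend : Filter.Tendsto (fun n : ℕ => c ^ (p ^ n + 1)) Filter.atTop (nhds c) := by
    have h1 : Filter.Tendsto (fun n : ℕ => c ^ (p ^ n) * c) Filter.atTop (nhds (1 * c)) :=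
      (aux_tendsto_pow hp hGpro c).mul_const c
    rw [one_mul] at h1
    simpa [pow_succ] using h1
  have hc : c ∈ (fun x => x * x) '' K :=
    hSclosed.mem_of_tendsto htend (Filter.Eventually.of_forall hmem)
  obtain ⟨d, hdK, hd⟩ := hc
  exact ⟨d, hdK, hd⟩

/-- Let `G` be a `σ`-pro-`p`-group, `N` a `σ`-invariant closed
normal subgroup of `G`, and `ε ∈ {+1, −1}`. Then the projection `G → G/N`
restricts to a surjective map `G^ε → (G/N)^ε`. Here `σbar` is the automorphism
of `G/N` induced by `σ`. -/
theorem sigma_pro_p_group_quotient_parts_surjective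
    {p : ℕ} (hp : p.Prime) (hodd : Odd p)
    {G : Type*} [Group G] [TopologicalSpace G] [IsTopologicalGroup G]
    [CompactSpace G] [T2Space G] [TotallyDisconnectedSpace G]
    (hGpro : ∀ U : Subgroup G, U.Normal → IsOpen (U : Set G) → ∃ n : ℕ, U.index = p ^ n)
    (σ : G ≃* G) (hσcont : Continuous σ) (hσ : ∀ a, σ (σ a) = a)
    (N : Subgroup G) [N.Normal] (hNclosed : IsClosed (N : Set G))
    (hNσ : ∀ a, σ a ∈ N ↔ a ∈ N)
    (σbar : G ⧸ N →* G ⧸ N) (hσbar : ∀ g : G, σbar (g : G ⧸ N) = ((σ g : G) : G ⧸ N))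
    (ε : ℤ) (hε : ε = 1 ∨ ε = -1) :
    Set.MapsTo (fun g : G => (g : G ⧸ N)) {a : G | σ a = a ^ ε}
      {x : G ⧸ N | σbar x = x ^ ε} ∧
    Set.SurjOn (fun g : G => (g : G ⧸ N)) {a : G | σ a = a ^ ε}
      {x : G ⧸ N | σbar x = x ^ ε} := by
  constructor
  · intro a ha
    simp only [Set.mem_setOf_eq] at ha ⊢
    rw [hσbar, ha]
    exact QuotientGroup.mk_zpow N a ε
  · intro x hx
    obtain ⟨g, rfl⟩ := QuotientGroup.mk_surjective x
    simp only [Set.mem_setOf_eq] at hx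
    rw [hσbar] at hx
    rcases hε with rfl | rfl
    · -- ε = 1
      rw [zpow_one] at hx
      have hc0 : g⁻¹ * σ g ∈ N := QuotientGroup.eq.mp hx.symm
      set c : G := g⁻¹ * σ g with hc
      have hσc : σ c = c⁻¹ := by
        rw [hc, map_mul, map_inv, hσ, mul_inv_rev, inv_inv]
      obtain ⟨d, hdK, hd2⟩ := aux_sqrt hp hodd hGpro c
      have hKN : closure ((Subgroup.zpowers c : Subgroup G) : Set G) ⊆ (N : Set G) :=
        closure_minimal (Subgroup.zpowers_le.mpr hc0) hNclosed
      have hσd : σ d = d⁻¹ := by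
        have heq : Set.EqOn (fun y => σ y) (fun y : G => y⁻¹)
            ((Subgroup.zpowers c : Subgroup G) : Set G) := by
          intro y hy
          obtain ⟨k, rfl⟩ := Subgroup.mem_zpowers_iff.mp hy
          show σ (c ^ k) = (c ^ k)⁻¹
          rw [map_zpow, hσc, inv_zpow]
        exact (heq.closure hσcont continuous_inv) hdK
      refine ⟨g * d, ?_, ?_⟩
      · show σ (g * d) = (g * d) ^ (1 : ℤ)
        rw [zpow_one, map_mul, hσd]
        have hσg : σ g = g * c := by rw [hc, mul_inv_cancel_left]
        rw [hσg, ← hd2]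
        group
      · show ((g * d : G) : G ⧸ N) = (g : G ⧸ N)
        refine (QuotientGroup.eq.mpr ?_).symm
        simpa using hKN hdK
    · -- ε = -1
      rw [zpow_neg_one] at hx
      have hc0 : g * σ g ∈ N := by
        have : ((g⁻¹ : G) : G ⧸ N) = ((σ g : G) : G ⧸ N) := by
          rw [QuotientGroup.mk_inv, ← hx]
        simpa using QuotientGroup.eq.mp this
      set c : G := (g * σ g)⁻¹ with hc
      have hcN : c ∈ N := inv_mem hc0
      obtain ⟨d, hdK, hd2⟩ := aux_sqrt hp hodd hGpro c
      have hKN : closure ((Subgroup.zpowers c : Subgroup G) : Set G) ⊆ (N : Set G) :=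
        closure_minimal (Subgroup.zpowers_le.mpr hcN) hNclosed
      have hdN : d ∈ N := hKN hdK
      -- the conjugation relation on the closure
      have hbase : σ c = σ g * c * (σ g)⁻¹ := by
        rw [hc, map_inv, map_mul, hσ, mul_inv_rev]
        group
      have hσd : σ d = σ g * d * (σ g)⁻¹ := by
        have heq : Set.EqOn (fun y => σ y) (fun y : G => σ g * y * (σ g)⁻¹)
            ((Subgroup.zpowers c : Subgroup G) : Set G) := by
          intro y hy
          obtain ⟨k, rfl⟩ := Subgroup.mem_zpowers_iff.mp hy
          show σ (c ^ k) = σ g * c ^ k * (σ g)⁻¹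
          rw [map_zpow, hbase, conj_zpow]
        have hcont2 : Continuous (fun y : G => σ g * y * (σ g)⁻¹) := by
          continuity
        exact (heq.closure hσcont hcont2) hdK
      refine ⟨d * g, ?_, ?_⟩
      · show σ (d * g) = (d * g) ^ (-1 : ℤ)
        rw [zpow_neg_one, map_mul, hσd, mul_inv_rev]
        -- goal : σ g * d * (σ g)⁻¹ * σ g = g⁻¹ * d⁻¹
        have hdinv : d⁻¹ = g * σ g * d := by
          have h1 : g * σ g = (d * d)⁻¹ := by rw [hd2, hc, inv_inv]
          rw [h1]
          group
        rw [hdinv]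
        group
      · show ((d * g : G) : G ⧸ N) = (g : G ⧸ N)
        refine (QuotientGroup.eq.mpr ?_).symm
        have : g⁻¹ * d * g ∈ N := Subgroup.Normal.conj_mem' ‹N.Normal› d hdN g
        simpa [mul_assoc] using this
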